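/- arXiv:2406.09574 — 4 statements merged into one kernel-verified Lean document; each statement's English description precedes it below -/
import Mathlib

section
/- Let n ≥ 1 and p : Fin n → ℝ with p_i > 0 for every i. Then the function x ↦ 1 − ∏_{i} (1 − exp(−p_i · x)) is integrable on [0, ∞), and ∫₀^∞ (1 − ∏_{i} (1 − exp(−p_i · x))) dx = Σ_{S ⊆ Fin n, S ≠ ∅} (−1)^{|S|+1} / (Σ_{i ∈ S} p_i). (This is the paper's integral representation (Eq. 'arbitraryksample') of the expected coupon-collection time for an arbitrary sampling distribution with item probabilities p_i.) -/
open Finset Real MeasureTheory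

lemma integral_exp_neg_mul_Ioi_zero {b : ℝ} (hb : 0 < b) :
    ∫ x in Set.Ioi (0 : ℝ), Real.exp (-b * x) = 1 / b := by
  have := MeasureTheory.integral_comp_mul_left_Ioi (fun y => Real.exp (-y)) 0 hb
  simp only [mul_zero, neg_mul] at this ⊢
  rw [show (fun x => Real.exp (-(b * x))) = fun x => (fun y => Real.exp (-y)) (b * x) from rfl]
  rw [this, integral_exp_neg_Ioi_zero, smul_eq_mul, mul_one, one_div]

theorem coupon_collector_integral (n : ℕ) (hn : 1 ≤ n) (p : Fin n → ℝ)
    (hp : ∀ i, 0 < p i) :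
    IntegrableOn (fun x : ℝ => 1 - ∏ i, (1 - Real.exp (-p i * x))) (Set.Ici 0) ∧
    ∫ x in Set.Ici (0 : ℝ), (1 - ∏ i, (1 - Real.exp (-p i * x)))
      = ∑ S ∈ (Finset.univ : Finset (Fin n)).powerset.filter fun S => S.Nonempty,
          (-1 : ℝ) ^ (S.card + 1) / (∑ i ∈ S, p i) := by
  set F := (Finset.univ : Finset (Fin n)).powerset.filter fun S => S.Nonempty with hF
  have hpos : ∀ S ∈ F, 0 < ∑ i ∈ S, p i := by
    intro S hS
    rw [hF, Finset.mem_filter] at hS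
    exact Finset.sum_pos (fun i _ => hp i) hS.2
  -- pointwise identity
  have key : ∀ x : ℝ, 1 - ∏ i, (1 - Real.exp (-p i * x))
      = ∑ S ∈ F, (-1 : ℝ) ^ (S.card + 1) * Real.exp (-(∑ i ∈ S, p i) * x) := by
    intro x
    have hprod : ∏ i, (1 - Real.exp (-p i * x))
        = ∑ S ∈ (Finset.univ : Finset (Fin n)).powerset,
            (-1 : ℝ) ^ S.card * Real.exp (-(∑ i ∈ S, p i) * x) := by
      have := Finset.prod_add (fun i : Fin n => -Real.exp (-p i * x))
        (fun _ : Fin n => (1 : ℝ)) Finset.univ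
      calc ∏ i, (1 - Real.exp (-p i * x))
          = ∏ i, ((-Real.exp (-p i * x)) + 1) := by
            refine Finset.prod_congr rfl fun i _ => by ring
        _ = ∑ S ∈ (Finset.univ : Finset (Fin n)).powerset,
              (∏ i ∈ S, (-Real.exp (-p i * x))) * ∏ _i ∈ Finset.univ \ S, (1:ℝ) := this
        _ = _ := by
            refine Finset.sum_congr rfl fun S _ => ?_
            rw [Finset.prod_const_one, mul_one]
            calc ∏ i ∈ S, -Real.exp (-p i * x)
                = ∏ i ∈ S, ((-1 : ℝ) * Real.exp (-p i * x)) := by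
                  refine Finset.prod_congr rfl fun i _ => by ring
              _ = (-1 : ℝ) ^ S.card * ∏ i ∈ S, Real.exp (-p i * x) := by
                  rw [Finset.prod_mul_distrib, Finset.prod_const]
              _ = (-1 : ℝ) ^ S.card * Real.exp (-(∑ i ∈ S, p i) * x) := by
                  have harg : (-(∑ i ∈ S, p i)) * x = ∑ i ∈ S, -p i * x := by
                    rw [neg_mul, Finset.sum_mul, ← Finset.sum_neg_distrib]
                    exact Finset.sum_congr rfl fun i _ => (neg_mul _ _).symm
                  rw [← Real.exp_sum, harg]
    rw [hprod, ← Finset.sum_filter_add_sum_filter_not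
      (Finset.univ : Finset (Fin n)).powerset (fun S => S.Nonempty)]
    have hempty : (Finset.univ : Finset (Fin n)).powerset.filter
        (fun S => ¬ S.Nonempty) = {∅} := by
      ext S
      simp [Finset.not_nonempty_iff_eq_empty]
    rw [hempty, Finset.sum_singleton]
    simp only [Finset.card_empty, pow_zero, Finset.sum_empty, neg_zero, zero_mul,
      Real.exp_zero, mul_one]
    rw [← hF]
    rw [show ∀ a : ℝ, 1 - (a + 1) = -a from fun a => by ring, ← Finset.sum_neg_distrib]
    refine Finset.sum_congr rfl fun S _ => ?_
    rw [pow_succ]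
    ring
  have hint : ∀ S ∈ F, IntegrableOn
      (fun x : ℝ => (-1 : ℝ) ^ (S.card + 1) * Real.exp (-(∑ i ∈ S, p i) * x))
      (Set.Ici 0) := by
    intro S hS
    have h1 : IntegrableOn (fun x : ℝ => Real.exp (-(∑ i ∈ S, p i) * x)) (Set.Ici 0) :=
      (integrableOn_Ici_iff_integrableOn_Ioi (by simp)).2 (exp_neg_integrableOn_Ioi 0 (hpos S hS))
    exact h1.const_mul _
  have hInt : IntegrableOn (fun x : ℝ => 1 - ∏ i, (1 - Real.exp (-p i * x)))
      (Set.Ici 0) := by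
    have : (fun x : ℝ => 1 - ∏ i, (1 - Real.exp (-p i * x)))
        = fun x : ℝ => ∑ S ∈ F, (-1 : ℝ) ^ (S.card + 1) * Real.exp (-(∑ i ∈ S, p i) * x) :=
      funext key
    rw [this]
    exact MeasureTheory.integrable_finset_sum F hint
  refine ⟨hInt, ?_⟩
  calc ∫ x in Set.Ici (0 : ℝ), (1 - ∏ i, (1 - Real.exp (-p i * x)))
      = ∫ x in Set.Ici (0 : ℝ),
          ∑ S ∈ F, (-1 : ℝ) ^ (S.card + 1) * Real.exp (-(∑ i ∈ S, p i) * x) := by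
        congr 1; exact funext key
    _ = ∑ S ∈ F, ∫ x in Set.Ici (0 : ℝ),
          (-1 : ℝ) ^ (S.card + 1) * Real.exp (-(∑ i ∈ S, p i) * x) :=
        MeasureTheory.integral_finset_sum F hint
    _ = ∑ S ∈ F, (-1 : ℝ) ^ (S.card + 1) / (∑ i ∈ S, p i) := by
        refine Finset.sum_congr rfl fun S hS => ?_
        rw [MeasureTheory.integral_const_mul, MeasureTheory.integral_Ici_eq_integral_Ioi,
          integral_exp_neg_mul_Ioi_zero (hpos S hS)]
        ring
end

section
/- Let n ≥ 1, p : Fin n → ℝ, and p_min > 0 with p_min ≤ p_i for every i. Then ∫₀^∞ (1 − ∏_{i} (1 − exp(−p_i · x))) dx ≤ H_n / p_min. (This is the paper's upper bound on the expected number of i.i.d. samples needed to collect all n items when each item has sampling probability at least p_min, yielding E[T] ≤ H_n / μ_min² in the action-pair setting.) -/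
open Real MeasureTheory Finset

lemma key_integrable (a : ℝ) (ha : 0 < a) (k : ℕ) :
    MeasureTheory.IntegrableOn
      (fun x => (1 - Real.exp (-a*x))^k * Real.exp (-a*x)) (Set.Ioi (0:ℝ)) := by
  have hexp := exp_neg_integrableOn_Ioi 0 ha
  apply hexp.mono'
  · exact (Continuous.mul (by continuity) (by continuity)).aestronglyMeasurable
  · filter_upwards [ae_restrict_mem measurableSet_Ioi] with x hx
    have hx0 : (0:ℝ) < x := hx
    have h1 : Real.exp (-a*x) ≤ 1 := by
      apply Real.exp_le_one_iff.mpr; nlinarith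
    have h2 : (0:ℝ) ≤ 1 - Real.exp (-a*x) := by linarith
    have h3 : (1 - Real.exp (-a*x))^k ≤ 1 :=
      pow_le_one₀ h2 (by have := Real.exp_pos (-a*x); linarith)
    rw [Real.norm_eq_abs, abs_of_nonneg (by positivity)]
    calc (1 - Real.exp (-a*x))^k * Real.exp (-a*x)
        ≤ 1 * Real.exp (-a*x) := by
          apply mul_le_mul_of_nonneg_right h3 (Real.exp_nonneg _)
      _ = Real.exp (-a*x) := one_mul _

lemma key_int (a : ℝ) (ha : 0 < a) (k : ℕ) :
    ∫ x in Set.Ioi (0:ℝ), (1 - Real.exp (-a * x))^k * Real.exp (-a * x)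
      = 1 / (a * (k+1)) := by
  have hak : (a * ((k:ℝ)+1)) ≠ 0 := by positivity
  have hderiv : ∀ x ∈ Set.Ici (0:ℝ),
      HasDerivAt (fun x => (1 - Real.exp (-a*x))^(k+1) / (a*((k:ℝ)+1)))
        ((1 - Real.exp (-a*x))^k * Real.exp (-a*x)) x := by
    intro x _
    have h1 : HasDerivAt (fun x : ℝ => -a * x) (-a) x := by
      simpa using (hasDerivAt_id x).const_mul (-a)
    have h2 : HasDerivAt (fun x : ℝ => 1 - Real.exp (-a*x)) (a * Real.exp (-a*x)) x := by
      have := (h1.exp).const_sub 1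
      exact this.congr_deriv (by ring)
    have h3 := (h2.pow (k+1)).div_const (a*((k:ℝ)+1))
    refine h3.congr_deriv ?_
    push_cast
    field_simp
  have hint := key_integrable a ha k
  have htop : Filter.Tendsto (fun x => (1 - Real.exp (-a*x))^(k+1) / (a*((k:ℝ)+1)))
      Filter.atTop (nhds (1 / (a*((k:ℝ)+1)))) := by
    have h0 : Filter.Tendsto (fun x : ℝ => Real.exp (-a*x)) Filter.atTop (nhds 0) := by
      have hmul : Filter.Tendsto (fun x : ℝ => a*x) Filter.atTop Filter.atTop :=
        Filter.Tendsto.const_mul_atTop ha Filter.tendsto_id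
      have hneg : Filter.Tendsto (fun x : ℝ => -a*x) Filter.atTop Filter.atBot :=
        (Filter.tendsto_neg_atTop_atBot.comp hmul).congr (fun x => by simp [neg_mul])
      exact Real.tendsto_exp_atBot.comp hneg
    have := (((h0.const_sub 1).pow (k+1)).div_const (a*((k:ℝ)+1)))
    simpa using this
  rw [integral_Ioi_of_hasDerivAt_of_tendsto' hderiv hint htop]
  simp

lemma telescope (u : ℝ) (n : ℕ) :
    ∑ k ∈ Finset.range n, (1-u)^k * u = 1 - (1-u)^n := by
  induction n with
  | zero => simp
  | succ m ih => rw [Finset.sum_range_succ, ih, pow_succ]; ring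

theorem coupon_collector_integral_le_harmonic (n : ℕ) (hn : 1 ≤ n)
    (p : Fin n → ℝ) (pmin : ℝ) (hpmin : 0 < pmin) (hp : ∀ i, pmin ≤ p i) :
    ∫ x in Set.Ici (0 : ℝ), (1 - ∏ i, (1 - Real.exp (-p i * x)))
      ≤ (∑ k ∈ Finset.Icc 1 n, 1 / (k : ℝ)) / pmin := by
  rw [MeasureTheory.integral_Ici_eq_integral_Ioi]
  set g : ℝ → ℝ :=
    fun x => ∑ k ∈ Finset.range n, (1 - Real.exp (-pmin*x))^k * Real.exp (-pmin*x) with hgdef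
  have hg_int : MeasureTheory.IntegrableOn g (Set.Ioi 0) :=
    MeasureTheory.integrable_finset_sum _ (fun k _ => key_integrable pmin hpmin k)
  have hmono : ∫ x in Set.Ioi (0:ℝ), (1 - ∏ i, (1 - Real.exp (-p i * x)))
      ≤ ∫ x in Set.Ioi (0:ℝ), g x := by
    apply MeasureTheory.integral_mono_of_nonneg ?_ hg_int
    · filter_upwards [ae_restrict_mem measurableSet_Ioi] with x hx
      have hx0 : (0:ℝ) ≤ x := le_of_lt hx
      have hfac : ∀ i : Fin n, 0 ≤ 1 - Real.exp (-p i * x) ∧ 1 - Real.exp (-p i * x) ≤ 1 := by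
        intro i
        have h1 : Real.exp (-p i * x) ≤ 1 := by
          apply Real.exp_le_one_iff.mpr
          have : 0 ≤ p i := le_trans hpmin.le (hp i)
          nlinarith
        have h2 := Real.exp_pos (-p i * x)
        constructor <;> linarith
      have hprod : (1 - Real.exp (-pmin*x))^n ≤ ∏ i, (1 - Real.exp (-p i * x)) := by
        have : (1 - Real.exp (-pmin*x))^n = ∏ _i : Fin n, (1 - Real.exp (-pmin*x)) := by
          rw [Finset.prod_const, Finset.card_univ, Fintype.card_fin]
        rw [this]
        apply Finset.prod_le_prod
        · intro i _
          have h1 : Real.exp (-pmin * x) ≤ 1 := by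
            apply Real.exp_le_one_iff.mpr; nlinarith
          linarith
        · intro i _
          have : Real.exp (-p i * x) ≤ Real.exp (-pmin * x) := by
            apply Real.exp_le_exp.mpr
            have := hp i
            nlinarith
          linarith
      have hgx : g x = 1 - (1 - Real.exp (-pmin*x))^n := telescope _ n
      rw [hgx]
      have hprodle : ∏ i, (1 - Real.exp (-p i * x)) ≤ 1 := by
        apply Finset.prod_le_one
        · intro i _; exact (hfac i).1
        · intro i _; exact (hfac i).2
      linarith
    · filter_upwards [ae_restrict_mem measurableSet_Ioi] with x hx
      have hx0 : (0:ℝ) ≤ x := le_of_lt hx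
      have hprodnn : ∏ i, (1 - Real.exp (-p i * x)) ≤ 1 := by
        apply Finset.prod_le_one
        · intro i _
          have h1 : Real.exp (-p i * x) ≤ 1 := by
            apply Real.exp_le_one_iff.mpr
            have : 0 ≤ p i := le_trans hpmin.le (hp i)
            nlinarith
          linarith
        · intro i _
          have h2 := Real.exp_pos (-p i * x)
          linarith
      simp only [Pi.zero_apply]
      linarith
  refine le_trans hmono ?_
  have hval : ∫ x in Set.Ioi (0:ℝ), g x
      = ∑ k ∈ Finset.range n, 1 / (pmin * (k+1)) := by
    rw [hgdef]
    rw [MeasureTheory.integral_finset_sum _ (fun k _ => key_integrable pmin hpmin k)]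
    exact Finset.sum_congr rfl (fun k _ => key_int pmin hpmin k)
  rw [hval]
  have hsum : ∑ k ∈ Finset.Icc 1 n, 1/(k:ℝ) = ∑ k ∈ Finset.range n, 1/((k:ℝ)+1) := by
    rw [← Finset.Ico_add_one_right_eq_Icc, Finset.sum_Ico_eq_sum_range]
    apply Finset.sum_congr rfl
    intro k _
    push_cast
    ring
  rw [hsum, Finset.sum_div]
  apply le_of_eq
  apply Finset.sum_congr rfl
  intro k _
  rw [div_div, mul_comm]
end

section
/- Let n ≥ 1 and let μ be a probability measure on Fin n with μ{i} > 0 for every i. Consider the sample space Ω = (ℕ → Fin n) equipped with the infinite product measure with each coordinate distributed according to μ (i.i.d. draws X₀, X₁, …). For each i define T_i(ω) = 1 + inf{k : ω(k) = i} (the number of draws until item i first appears) and T(ω) = max_i T_i(ω) (the cover time). Then T is almost surely finite, integrable, and E[T] = Σ_{S ⊆ Fin n, S ≠ ∅} (−1)^{|S|+1} / μ(S), where μ(S) = Σ_{i ∈ S} μ{i}. (This is the paper's exact formula for the expected coupon-collection time under an arbitrary sampling distribution.) -/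
open Finset MeasureTheory
open scoped ENNReal

/-- Number of i.i.d. draws until item `i` first appears: `1 + inf {k | ω k = i}`
(`⊤` if it never appears). -/
noncomputable def hitNumber (n : ℕ) (ω : ℕ → Fin n) (i : Fin n) : ℝ≥0∞ :=
  1 + ⨅ k ∈ {k : ℕ | ω k = i}, (k : ℝ≥0∞)

/-- The cover time: number of draws until every item has appeared. -/
noncomputable def coverTime (n : ℕ) (ω : ℕ → Fin n) : ℝ≥0∞ :=
  ⨆ i : Fin n, hitNumber n ω i


lemma hitNumber_gt_iff (n : ℕ) (ω : ℕ → Fin n) (i : Fin n) (t : ℕ) :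
    (t : ℝ≥0∞) < hitNumber n ω i ↔ ∀ k < t, ω k ≠ i := by
  constructor
  · intro h k hk hki
    have hJ : (⨅ k ∈ {k : ℕ | ω k = i}, (k : ℝ≥0∞)) ≤ (k : ℝ≥0∞) := biInf_le _ hki
    have h1 : hitNumber n ω i ≤ 1 + (k : ℝ≥0∞) := add_le_add (le_refl 1) hJ
    have h2 : (1 : ℝ≥0∞) + k ≤ t := by
      have : (k + 1 : ℕ) ≤ t := hk
      rw [add_comm]
      exact_mod_cast this
    exact absurd (h.trans_le (h1.trans h2)) (lt_irrefl _)
  · intro h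
    have hJ : (t : ℝ≥0∞) ≤ ⨅ k ∈ {k : ℕ | ω k = i}, (k : ℝ≥0∞) := by
      refine le_iInf fun k => le_iInf fun hk => ?_
      have : t ≤ k := not_lt.mp fun hlt => h k hlt hk
      exact_mod_cast this
    calc (t : ℝ≥0∞) < 1 + t := by
          rw [add_comm]
          exact ENNReal.lt_add_right (ENNReal.natCast_ne_top t) one_ne_zero
      _ ≤ hitNumber n ω i := add_le_add (le_refl 1) hJ

lemma hitNumber_repr (n : ℕ) (ω : ℕ → Fin n) (i : Fin n) :
    hitNumber n ω i = ⊤ ∨ ∃ m : ℕ, hitNumber n ω i = m := by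
  by_cases h : ∃ k, ω k = i
  · right
    refine ⟨Nat.find h + 1, ?_⟩
    have hJ : (⨅ k ∈ {k : ℕ | ω k = i}, (k : ℝ≥0∞)) = (Nat.find h : ℝ≥0∞) := by
      apply le_antisymm
      · exact biInf_le _ (Nat.find_spec h)
      · exact le_iInf fun k => le_iInf fun hk => by exact_mod_cast Nat.find_min' h hk
    rw [hitNumber, hJ]
    push_cast
    ring
  · left
    rw [hitNumber]
    have he : {k : ℕ | ω k = i} = ∅ := by
      push_neg at h
      exact Set.eq_empty_iff_forall_notMem.mpr h
    rw [he]
    simp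

lemma coverTime_repr (n : ℕ) (ω : ℕ → Fin n) :
    coverTime n ω = ⊤ ∨ ∃ m : ℕ, coverTime n ω = m := by
  by_cases h : ∀ i : Fin n, ∃ m : ℕ, hitNumber n ω i = m
  · right
    choose g hg using h
    refine ⟨Finset.univ.sup g, ?_⟩
    rw [coverTime, ← Finset.sup_univ_eq_iSup]
    have : Finset.univ.sup (fun i => hitNumber n ω i) = Finset.univ.sup ((fun m : ℕ => (m : ℝ≥0∞)) ∘ g) := by
      apply Finset.sup_congr rfl
      intro i _
      exact hg i
    rw [this, ← Finset.comp_sup_eq_sup_comp (fun m : ℕ => (m : ℝ≥0∞))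
      (fun x y => Monotone.map_max Nat.mono_cast) (by simp)]
  · left
    push_neg at h
    obtain ⟨i, hi⟩ := h
    have htop : hitNumber n ω i = ⊤ := by
      rcases hitNumber_repr n ω i with h' | ⟨m, h'⟩
      · exact h'
      · exact absurd h' (hi m)
    rw [coverTime, eq_top_iff, ← htop]
    exact le_iSup _ i

lemma tsum_indicator_lt (a : ℝ≥0∞) (h : a = ⊤ ∨ ∃ m : ℕ, a = m) :
    ∑' t : ℕ, (if (t : ℝ≥0∞) < a then (1 : ℝ≥0∞) else 0) = a := by
  rcases h with h | ⟨m, h⟩ <;> subst h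
  · simp only [lt_top_iff_ne_top, ENNReal.natCast_ne_top, if_true]
    exact ENNReal.tsum_const_eq_top_of_ne_zero one_ne_zero
  · rw [tsum_eq_sum (s := Finset.range m) (fun t ht => by
      rw [if_neg]
      rw [Finset.mem_range] at ht
      exact_mod_cast not_lt.mpr (not_lt.mp ht))]
    rw [Finset.sum_congr rfl (fun t ht => if_pos (by exact_mod_cast Finset.mem_range.mp ht))]
    simp

lemma measurable_hitNumber (n : ℕ) (i : Fin n) :
    Measurable (fun ω : ℕ → Fin n => hitNumber n ω i) := by
  classical
  have heq : (fun ω : ℕ → Fin n => hitNumber n ω i)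
      = fun ω => 1 + ⨅ k : ℕ, (if ω k = i then (k : ℝ≥0∞) else ⊤) := by
    funext ω
    rw [hitNumber]
    congr 1
    refine iInf_congr fun k => ?_
    by_cases h : ω k = i
    · rw [if_pos h, iInf_pos (show k ∈ {k : ℕ | ω k = i} from h)]
    · rw [if_neg h, iInf_neg (show k ∉ {k : ℕ | ω k = i} from h)]
  rw [heq]
  refine measurable_const.add (Measurable.iInf (ι := ℕ) (α := ℝ≥0∞) fun k => ?_)
  have hs : MeasurableSet {ω : ℕ → Fin n | ω k = i} :=
    by
      have hs0 : MeasurableSet ((fun ω : ℕ → Fin n => ω k) ⁻¹' {i}) :=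
        measurable_pi_apply k (measurableSet_singleton i)
      exact hs0
  exact Measurable.ite hs measurable_const measurable_const

lemma measurable_coverTime (n : ℕ) : Measurable (coverTime n) :=
  Measurable.iSup fun i => measurable_hitNumber n i

lemma prob_incl_excl {α : Type*} [MeasurableSpace α] (P : Measure α) [IsProbabilityMeasure P]
    {n : ℕ} (A : Fin n → Set α) (hA : ∀ i, MeasurableSet (A i)) :
    (P (⋃ i, A i)).toReal
      = ∑ S ∈ (Finset.univ : Finset (Fin n)).powerset.filter (fun S => S.Nonempty),
          (-1 : ℝ) ^ (S.card + 1) * (P (⋂ i ∈ S, A i)).toReal := by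
  classical
  have hAS : ∀ S : Finset (Fin n), MeasurableSet (⋂ i ∈ S, A i) :=
    fun S => MeasurableSet.biInter (Finset.countable_toSet S) fun i _ => hA i
  have h1 : ∀ (S : Finset (Fin n)) (x : α),
      (∏ i ∈ S, (A i).indicator (fun _ => (1 : ℝ)) x)
        = (⋂ i ∈ S, A i).indicator (fun _ => (1 : ℝ)) x := by
    intro S x
    by_cases h : x ∈ ⋂ i ∈ S, A i
    · rw [Set.indicator_of_mem h]
      exact Finset.prod_eq_one fun i hi =>
        Set.indicator_of_mem (Set.mem_iInter₂.mp h i hi) _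
    · rw [Set.indicator_of_notMem h]
      obtain ⟨i, hi, hxi⟩ : ∃ i ∈ S, x ∉ A i := by
        by_contra hc
        push_neg at hc
        exact h (Set.mem_iInter₂.mpr hc)
      exact Finset.prod_eq_zero hi (Set.indicator_of_notMem hxi _)
  have key : ∀ x : α, (⋃ i, A i).indicator (fun _ => (1 : ℝ)) x
      = ∑ S ∈ (Finset.univ : Finset (Fin n)).powerset.filter (fun S => S.Nonempty),
          (-1 : ℝ) ^ (S.card + 1) * (⋂ i ∈ S, A i).indicator (fun _ => (1 : ℝ)) x := by
    intro x
    have h2 : ∏ i ∈ (Finset.univ : Finset (Fin n)),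
        ((1 : ℝ) - (A i).indicator (fun _ => (1 : ℝ)) x)
          = 1 - (⋃ i, A i).indicator (fun _ => (1 : ℝ)) x := by
      by_cases h : x ∈ ⋃ i, A i
      · rw [Set.indicator_of_mem h]
        obtain ⟨i, hi⟩ := Set.mem_iUnion.mp h
        rw [Finset.prod_eq_zero (Finset.mem_univ i)
          (by rw [Set.indicator_of_mem hi]; ring)]
        norm_num
      · rw [Set.indicator_of_notMem h]
        rw [Finset.prod_eq_one fun i _ => by
          rw [Set.indicator_of_notMem (fun hx => h (Set.mem_iUnion.mpr ⟨i, hx⟩))]; ring]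
        norm_num
    have h3 : ∏ i ∈ (Finset.univ : Finset (Fin n)),
        ((1 : ℝ) - (A i).indicator (fun _ => (1 : ℝ)) x)
          = ∑ S ∈ (Finset.univ : Finset (Fin n)).powerset,
              (-1 : ℝ) ^ S.card * (⋂ i ∈ S, A i).indicator (fun _ => (1 : ℝ)) x := by
      have hp := Finset.prod_add (fun i : Fin n => -(A i).indicator (fun _ => (1 : ℝ)) x)
        (fun _ => (1 : ℝ)) Finset.univ
      simp only [Finset.prod_const_one, mul_one] at hp
      calc ∏ i ∈ (Finset.univ : Finset (Fin n)),
            ((1 : ℝ) - (A i).indicator (fun _ => (1 : ℝ)) x)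
          = ∏ i ∈ (Finset.univ : Finset (Fin n)),
            (-(A i).indicator (fun _ => (1 : ℝ)) x + 1) := by
            refine Finset.prod_congr rfl fun i _ => by ring
        _ = ∑ S ∈ (Finset.univ : Finset (Fin n)).powerset,
              ∏ i ∈ S, -(A i).indicator (fun _ => (1 : ℝ)) x := hp
        _ = ∑ S ∈ (Finset.univ : Finset (Fin n)).powerset,
              (-1 : ℝ) ^ S.card * (⋂ i ∈ S, A i).indicator (fun _ => (1 : ℝ)) x := by
            refine Finset.sum_congr rfl fun S _ => ?_
            rw [← h1 S x, ← Finset.prod_const (-1 : ℝ), ← Finset.prod_mul_distrib]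
            exact Finset.prod_congr rfl fun i _ => by ring
    have h4 : ∑ S ∈ (Finset.univ : Finset (Fin n)).powerset.filter (fun S => ¬ S.Nonempty),
        (-1 : ℝ) ^ S.card * (⋂ i ∈ S, A i).indicator (fun _ => (1 : ℝ)) x = 1 := by
      have : (Finset.univ : Finset (Fin n)).powerset.filter (fun S => ¬ S.Nonempty) = {∅} := by
        ext S
        simp [Finset.not_nonempty_iff_eq_empty]
      rw [this]
      simp
    have h5 := (Finset.sum_filter_add_sum_filter_not
      (Finset.univ : Finset (Fin n)).powerset (fun S => S.Nonempty)
      (fun S => (-1 : ℝ) ^ S.card * (⋂ i ∈ S, A i).indicator (fun _ => (1 : ℝ)) x))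
    rw [h4] at h5
    have h6 : ∑ S ∈ (Finset.univ : Finset (Fin n)).powerset.filter (fun S => S.Nonempty),
        (-1 : ℝ) ^ (S.card + 1) * (⋂ i ∈ S, A i).indicator (fun _ => (1 : ℝ)) x
        = - ∑ S ∈ (Finset.univ : Finset (Fin n)).powerset.filter (fun S => S.Nonempty),
        (-1 : ℝ) ^ S.card * (⋂ i ∈ S, A i).indicator (fun _ => (1 : ℝ)) x := by
      rw [← Finset.sum_neg_distrib]
      exact Finset.sum_congr rfl fun S _ => by ring
    have := h2.symm.trans h3
    rw [← h5] at this
    rw [h6]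
    linarith
  calc (P (⋃ i, A i)).toReal
      = ∫ x, (⋃ i, A i).indicator (fun _ => (1 : ℝ)) x ∂P := by
        rw [integral_indicator_const (1 : ℝ) (MeasurableSet.iUnion hA)]
        simp [Measure.real]
    _ = ∫ x, ∑ S ∈ (Finset.univ : Finset (Fin n)).powerset.filter (fun S => S.Nonempty),
          (-1 : ℝ) ^ (S.card + 1) * (⋂ i ∈ S, A i).indicator (fun _ => (1 : ℝ)) x ∂P := by
        exact integral_congr_ae (Filter.Eventually.of_forall key)
    _ = ∑ S ∈ (Finset.univ : Finset (Fin n)).powerset.filter (fun S => S.Nonempty),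
          (-1 : ℝ) ^ (S.card + 1) * (P (⋂ i ∈ S, A i)).toReal := by
        rw [integral_finset_sum _ (fun S _ =>
          (((integrable_const (1 : ℝ)).indicator (hAS S)).const_mul _))]
        refine Finset.sum_congr rfl fun S _ => ?_
        rw [MeasureTheory.integral_const_mul, integral_indicator_const (1 : ℝ) (hAS S)]
        simp [Measure.real]
theorem expected_coupon_collector_time
    (n : ℕ) (hn : 1 ≤ n) (μ : Measure (Fin n)) [IsProbabilityMeasure μ]
    (hμ : ∀ i : Fin n, 0 < μ {i})
    (P : Measure (ℕ → Fin n)) [IsProbabilityMeasure P]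
    (hP : ∀ (F : Finset ℕ) (S : ℕ → Set (Fin n)),
      P {ω | ∀ k ∈ F, ω k ∈ S k} = ∏ k ∈ F, μ (S k)) :
    (∀ᵐ ω ∂P, coverTime n ω ≠ ⊤) ∧
    Integrable (fun ω => (coverTime n ω).toReal) P ∧
    ∫ ω, (coverTime n ω).toReal ∂P
      = ∑ S ∈ (Finset.univ : Finset (Fin n)).powerset.filter fun S => S.Nonempty,
          (-1 : ℝ) ^ (S.card + 1) / (∑ i ∈ S, (μ {i}).toReal) := by
  classical
  have hTmeas : Measurable (coverTime n) := measurable_coverTime n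
  set A : Fin n → ℕ → Set (ℕ → Fin n) := fun i t => {ω | ∀ k < t, ω k ≠ i} with hA
  have hAmeas : ∀ (i : Fin n) (t : ℕ), MeasurableSet (A i t) := by
    intro i t
    have he : A i t = ⋂ k ∈ Finset.range t, (fun ω : ℕ → Fin n => ω k) ⁻¹' ({i}ᶜ) := by
      ext ω
      simp [hA, Finset.mem_range]
    rw [he]
    exact MeasurableSet.biInter (Finset.range t).countable_toSet fun k _ =>
      measurable_pi_apply k (measurableSet_singleton i).compl
  have hsets : ∀ t : ℕ, {ω : ℕ → Fin n | (t : ℝ≥0∞) < coverTime n ω} = ⋃ i, A i t := by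
    intro t
    ext ω
    simp only [Set.mem_setOf_eq, coverTime, lt_iSup_iff, Set.mem_iUnion, hA]
    exact exists_congr fun i => hitNumber_gt_iff n ω i t
  have hIset : ∀ (S : Finset (Fin n)) (t : ℕ),
      (⋂ i ∈ S, A i t) = {ω : ℕ → Fin n | ∀ k ∈ Finset.range t, ω k ∈ ((↑S : Set (Fin n))ᶜ)} := by
    intro S t
    ext ω
    simp only [Set.mem_iInter, hA, Set.mem_setOf_eq, Finset.mem_range, Set.mem_compl_iff,
      Finset.mem_coe]
    constructor
    · intro h k hk hS
      exact h _ hS k hk rfl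
    · intro h i hi k hk he'
      exact h k hk (he' ▸ hi)
  have hSmeas : ∀ S : Finset (Fin n), MeasurableSet (↑S : Set (Fin n)) := by
    intro S
    exact S.finite_toSet.measurableSet
  have hμS : ∀ S : Finset (Fin n), μ (↑S : Set (Fin n)) = ∑ i ∈ S, μ {i} := by
    intro S
    rw [show (↑S : Set (Fin n)) = ⋃ i ∈ S, {i} from (Set.biUnion_of_singleton (↑S : Set (Fin n))).symm]
    rw [measure_biUnion_finset ?_ fun i _ => measurableSet_singleton i]
    intro i hi j hj hij
    simp only [Function.onFun, Set.disjoint_singleton]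
    exact hij
  have hPB : ∀ (S : Finset (Fin n)) (t : ℕ),
      P (⋂ i ∈ S, A i t) = (1 - μ (↑S : Set (Fin n))) ^ t := by
    intro S t
    rw [hIset S t, hP (Finset.range t) (fun _ => (↑S : Set (Fin n))ᶜ), Finset.prod_const,
      Finset.card_range, measure_compl (hSmeas S) (measure_ne_top μ _), measure_univ]
  have hmt : ∀ t : ℕ, MeasurableSet {ω : ℕ → Fin n | (t : ℝ≥0∞) < coverTime n ω} :=
    fun t => measurableSet_lt measurable_const hTmeas
  have hlin : ∫⁻ ω, coverTime n ω ∂P = ∑' t : ℕ, P {ω | (t : ℝ≥0∞) < coverTime n ω} := by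
    calc ∫⁻ ω, coverTime n ω ∂P
        = ∫⁻ ω, ∑' t : ℕ, (if (t : ℝ≥0∞) < coverTime n ω then (1 : ℝ≥0∞) else 0) ∂P :=
          lintegral_congr fun ω => (tsum_indicator_lt _ (coverTime_repr n ω)).symm
      _ = ∑' t : ℕ, ∫⁻ ω, (if (t : ℝ≥0∞) < coverTime n ω then (1 : ℝ≥0∞) else 0) ∂P :=
          lintegral_tsum fun t => (Measurable.ite (hmt t) measurable_const
            measurable_const).aemeasurable
      _ = ∑' t : ℕ, P {ω | (t : ℝ≥0∞) < coverTime n ω} := by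
          refine tsum_congr fun t => ?_
          rw [← lintegral_indicator_one (hmt t)]
          refine lintegral_congr fun ω => ?_
          by_cases h : (t : ℝ≥0∞) < coverTime n ω
          · simp [Set.indicator_apply, Set.mem_setOf_eq, h]
          · simp [Set.indicator_apply, Set.mem_setOf_eq, h]
  have hfin : ∑' t : ℕ, P {ω | (t : ℝ≥0∞) < coverTime n ω} ≠ ⊤ := by
    have hb : ∀ t : ℕ, P {ω | (t : ℝ≥0∞) < coverTime n ω}
        ≤ ∑ i : Fin n, (1 - μ ({i} : Set (Fin n))) ^ t := by
      intro t
      rw [hsets t]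
      refine (measure_iUnion_le _).trans ?_
      rw [tsum_fintype]
      refine Finset.sum_le_sum fun i _ => ?_
      have h1 : A i t = ⋂ j ∈ ({i} : Finset (Fin n)), A j t := by simp
      rw [h1, hPB, Finset.coe_singleton]
    refine ne_top_of_le_ne_top ?_ (ENNReal.tsum_le_tsum hb)
    rw [Summable.tsum_finsetSum fun i _ => ENNReal.summable]
    rw [Finset.sum_congr rfl fun i _ => by
      rw [ENNReal.tsum_geometric, ENNReal.sub_sub_cancel ENNReal.one_ne_top prob_le_one]]
    exact (ENNReal.sum_lt_top.mpr fun i _ => ENNReal.inv_lt_top.mpr (hμ i)).ne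
  have hlfin : ∫⁻ ω, coverTime n ω ∂P ≠ ⊤ := by
    rw [hlin]
    exact hfin
  have haelt : ∀ᵐ ω ∂P, coverTime n ω < ⊤ := ae_lt_top hTmeas hlfin
  refine ⟨haelt.mono fun ω h => h.ne,
    integrable_toReal_of_lintegral_ne_top hTmeas.aemeasurable hlfin, ?_⟩
  have hfacts : ∀ S : Finset (Fin n), S.Nonempty →
      0 < (μ (↑S : Set (Fin n))).toReal ∧ (μ (↑S : Set (Fin n))).toReal ≤ 1 := by
    intro S hS
    obtain ⟨i, hi⟩ := hS
    constructor
    · refine ENNReal.toReal_pos ?_ (measure_ne_top μ _)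
      have hle : μ {i} ≤ μ (↑S : Set (Fin n)) :=
        measure_mono (Set.singleton_subset_iff.mpr (Finset.mem_coe.mpr hi))
      exact fun h0 => (hμ i).ne' (le_antisymm (h0 ▸ hle) zero_le)
    · have := ENNReal.toReal_mono ENNReal.one_ne_top (prob_le_one (μ := μ) (s := ↑S))
      simpa using this
  calc ∫ ω, (coverTime n ω).toReal ∂P
      = (∫⁻ ω, coverTime n ω ∂P).toReal := integral_toReal hTmeas.aemeasurable haelt
    _ = ∑' t : ℕ, (P {ω | (t : ℝ≥0∞) < coverTime n ω}).toReal := by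
        rw [hlin, ENNReal.tsum_toReal_eq fun t => measure_ne_top P _]
    _ = ∑' t : ℕ, ∑ S ∈ (Finset.univ : Finset (Fin n)).powerset.filter (fun S => S.Nonempty),
          (-1 : ℝ) ^ (S.card + 1) * (1 - (μ (↑S : Set (Fin n))).toReal) ^ t := by
        refine tsum_congr fun t => ?_
        rw [hsets t, prob_incl_excl P (fun i => A i t) (fun i => hAmeas i t)]
        refine Finset.sum_congr rfl fun S hS => ?_
        rw [hPB S t, ENNReal.toReal_pow,
          ENNReal.toReal_sub_of_le prob_le_one ENNReal.one_ne_top, ENNReal.toReal_one]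
    _ = ∑ S ∈ (Finset.univ : Finset (Fin n)).powerset.filter (fun S => S.Nonempty),
          ∑' t : ℕ, (-1 : ℝ) ^ (S.card + 1) * (1 - (μ (↑S : Set (Fin n))).toReal) ^ t := by
        refine Summable.tsum_finsetSum fun S hS => ?_
        have hS' : S.Nonempty := (Finset.mem_filter.mp hS).2
        obtain ⟨hp0, hp1⟩ := hfacts S hS'
        exact (summable_geometric_of_lt_one (by linarith) (by linarith)).mul_left _
    _ = ∑ S ∈ (Finset.univ : Finset (Fin n)).powerset.filter (fun S => S.Nonempty),
          (-1 : ℝ) ^ (S.card + 1) / (∑ i ∈ S, (μ {i}).toReal) := by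
        refine Finset.sum_congr rfl fun S hS => ?_
        have hS' : S.Nonempty := (Finset.mem_filter.mp hS).2
        obtain ⟨hp0, hp1⟩ := hfacts S hS'
        rw [tsum_mul_left, tsum_geometric_of_lt_one (by linarith) (by linarith)]
        rw [show (1 : ℝ) - (1 - (μ (↑S : Set (Fin n))).toReal) = (μ (↑S : Set (Fin n))).toReal
          by ring]
        rw [div_eq_mul_inv]
        congr 1
        congr 1
        rw [hμS S, ENNReal.toReal_sum fun i _ => measure_ne_top μ _]
end

section
/- Let n ≥ 1, p > 0, and let μ be a probability measure on Fin n with μ{i} ≥ p for every i. Consider Ω = (ℕ → Fin n) with the infinite product measure of copies of μ (i.i.d. draws X₀, X₁, …). Then for every natural number N ≥ 1, the probability that some element of Fin n does not appear among X₀, …, X_{N−1} is at most H_n / (N·p). In particular, for ε ∈ (0,1), if (N : ℝ) ≥ H_n / (p·ε), then with probability at least 1 − ε every element of Fin n appears among the first N draws. (This is the paper's Lemma on the sample complexity for arbitrary action-sampling distributions: N ≳ ln K / (μ_min² ε) samples suffice to observe all action pairs with probability 1 − ε.) -/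
open Finset MeasureTheory
open scoped ENNReal

lemma harm_one_le (n : ℕ) (hn : 1 ≤ n) : (1:ℝ) ≤ ∑ k ∈ Finset.Icc 1 n, 1 / (k : ℝ) := by
  have h1 : (1:ℕ) ∈ Finset.Icc 1 n := by simp [hn]
  have := Finset.single_le_sum (f := fun k : ℕ => 1 / (k:ℝ))
    (fun i _ => by positivity) h1
  simpa using this

lemma log_le_harm (n : ℕ) : Real.log (n+1) ≤ ∑ k ∈ Finset.Icc 1 n, 1 / (k : ℝ) := by
  induction n with
  | zero => simp
  | succ m ih =>
    rw [Finset.sum_Icc_succ_top (by omega)]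
    have hpos : (0:ℝ) < (m:ℝ) + 1 := by positivity
    have hx : (0:ℝ) < ((m:ℝ)+2) / ((m:ℝ)+1) := by positivity
    have hlog := Real.log_le_sub_one_of_pos hx
    have hdiv : Real.log (((m:ℝ)+2) / ((m:ℝ)+1)) = Real.log ((m:ℝ)+2) - Real.log ((m:ℝ)+1) := by
      rw [Real.log_div (by positivity) (by positivity)]
    have hfield : ((m:ℝ)+2) / ((m:ℝ)+1) - 1 = 1 / ((m:ℝ)+1) := by
      field_simp
      ring
    rw [hdiv, hfield] at hlog
    push_cast
    push_cast at ih
    have h2 : (m:ℝ) + 1 + 1 = (m:ℝ) + 2 := by ring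
    rw [h2]
    linarith

lemma key_real (n N : ℕ) (p H : ℝ) (hp1 : p ≤ 1) (hH1 : 1 ≤ H)
    (hn : (n:ℝ) ≤ Real.exp H) (hNp : H ≤ (N:ℝ) * p) :
    (n:ℝ) * (1-p)^N ≤ H / ((N:ℝ) * p) := by
  set x : ℝ := (N:ℝ) * p with hxdef
  have hx0 : 0 < x := by linarith
  have h1 : (1:ℝ) - p ≤ Real.exp (-p) := by
    have := Real.add_one_le_exp (-p); linarith
  have h2 : ((1:ℝ) - p)^N ≤ (Real.exp (-p))^N :=
    pow_le_pow_left₀ (by linarith) h1 N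
  have h3 : (Real.exp (-p))^N = Real.exp (-x) := by
    rw [← Real.exp_nat_mul]; congr 1; rw [hxdef]; ring
  rw [h3] at h2
  have hexpx : 0 < Real.exp (-x) := Real.exp_pos _
  have hNpH : x ≤ H * Real.exp (x - H) := by
    nlinarith [Real.add_one_le_exp (x - H), Real.exp_pos (x - H)]
  have hA : x * Real.exp (-x) ≤ H * Real.exp (-H) := by
    have hmul := mul_le_mul_of_nonneg_right hNpH hexpx.le
    have he : Real.exp (x - H) * Real.exp (-x) = Real.exp (-H) := by
      rw [← Real.exp_add]; congr 1; ring
    calc x * Real.exp (-x) ≤ H * Real.exp (x - H) * Real.exp (-x) := hmul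
      _ = H * (Real.exp (x - H) * Real.exp (-x)) := by ring
      _ = H * Real.exp (-H) := by rw [he]
  rw [le_div_iff₀ hx0]
  have hfin : (n:ℝ) * (x * Real.exp (-x)) ≤ Real.exp H * (H * Real.exp (-H)) := by
    apply mul_le_mul hn hA (by positivity) (by positivity)
  have heH : Real.exp H * Real.exp (-H) = 1 := by
    rw [← Real.exp_add]; simp
  have hle : (n:ℝ) * (1-p)^N * x ≤ (n:ℝ) * (x * Real.exp (-x)) := by
    have hn0 : (0:ℝ) ≤ (n:ℝ) := Nat.cast_nonneg n
    nlinarith [mul_le_mul_of_nonneg_left h2 hn0]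
  nlinarith [hfin, hle]

theorem coupon_collector_sample_complexity
    (n : ℕ) (hn : 1 ≤ n) (p : ℝ) (hp : 0 < p)
    (μ : Measure (Fin n)) [IsProbabilityMeasure μ]
    (hμ : ∀ i : Fin n, p ≤ (μ {i}).toReal)
    (P : Measure (ℕ → Fin n)) [IsProbabilityMeasure P]
    (hP : ∀ (F : Finset ℕ) (S : ℕ → Set (Fin n)),
      P {ω | ∀ k ∈ F, ω k ∈ S k} = ∏ k ∈ F, μ (S k)) :
    (∀ N : ℕ, 1 ≤ N →
      (P {ω | ∃ i : Fin n, ∀ k < N, ω k ≠ i}).toReal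
        ≤ (∑ k ∈ Finset.Icc 1 n, 1 / (k : ℝ)) / ((N : ℝ) * p)) ∧
    (∀ (ε : ℝ), ε ∈ Set.Ioo (0 : ℝ) 1 → ∀ N : ℕ,
      (N : ℝ) ≥ (∑ k ∈ Finset.Icc 1 n, 1 / (k : ℝ)) / (p * ε) →
      (P {ω | ∀ i : Fin n, ∃ k < N, ω k = i}).toReal ≥ 1 - ε) := by
  set H : ℝ := ∑ k ∈ Finset.Icc 1 n, 1 / (k : ℝ) with hHdef
  have hH1 : (1:ℝ) ≤ H := harm_one_le n hn
  have hnexp : (n:ℝ) ≤ Real.exp H := by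
    have hl := log_le_harm n
    calc (n:ℝ) ≤ (n:ℝ) + 1 := by linarith
      _ = Real.exp (Real.log ((n:ℝ)+1)) := (Real.exp_log (by positivity)).symm
      _ ≤ Real.exp H := Real.exp_le_exp.mpr hl
  have htoReal_le_one : ∀ (s : Set (ℕ → Fin n)), (P s).toReal ≤ 1 := by
    intro s
    have h := ENNReal.toReal_mono (a := P s) (b := 1) (by simp) prob_le_one
    simpa using h
  have hμle1 : ∀ i : Fin n, (μ {i}).toReal ≤ 1 := by
    intro i
    have h := ENNReal.toReal_mono (a := μ {i}) (b := 1) (by simp) prob_le_one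
    simpa using h
  have hp1 : p ≤ 1 := le_trans (hμ ⟨0, hn⟩) (hμle1 _)
  have main : ∀ N : ℕ, 1 ≤ N →
      (P {ω | ∃ i : Fin n, ∀ k < N, ω k ≠ i}).toReal ≤ H / ((N:ℝ) * p) := by
    intro N hN
    have hN1 : (1:ℝ) ≤ (N:ℝ) := by exact_mod_cast hN
    have hNp0 : 0 < (N:ℝ) * p := by nlinarith
    by_cases hc : (N:ℝ) * p ≤ H
    · have h1 : (1:ℝ) ≤ H / ((N:ℝ)*p) := (le_div_iff₀ hNp0).mpr (by linarith)
      linarith [htoReal_le_one {ω | ∃ i : Fin n, ∀ k < N, ω k ≠ i}]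
    · push_neg at hc
      -- union bound
      have hbadi : ∀ i : Fin n, P {ω | ∀ k < N, ω k ≠ i} = (μ ({i}ᶜ))^N := by
        intro i
        have hset : {ω : ℕ → Fin n | ∀ k < N, ω k ≠ i}
            = {ω | ∀ k ∈ Finset.range N, ω k ∈ ({i}ᶜ : Set (Fin n))} := by
          ext ω; simp
        rw [hset, hP (Finset.range N) (fun _ => ({i}ᶜ : Set (Fin n))),
          Finset.prod_const, Finset.card_range]
      have hle1 : P {ω | ∃ i : Fin n, ∀ k < N, ω k ≠ i}
          ≤ ∑ i : Fin n, (μ ({i}ᶜ))^N := by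
        have hU : {ω : ℕ → Fin n | ∃ i : Fin n, ∀ k < N, ω k ≠ i}
            = ⋃ i : Fin n, {ω | ∀ k < N, ω k ≠ i} := by
          ext ω; simp
        calc P {ω | ∃ i : Fin n, ∀ k < N, ω k ≠ i}
            ≤ ∑ i : Fin n, P {ω | ∀ k < N, ω k ≠ i} := by
              rw [hU]; exact measure_iUnion_fintype_le P _
          _ = ∑ i : Fin n, (μ ({i}ᶜ))^N := by
              exact Finset.sum_congr rfl (fun i _ => hbadi i)
      have hfin : (∑ i : Fin n, (μ ({i}ᶜ))^N) ≠ ⊤ := by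
        apply ne_of_lt
        apply ENNReal.sum_lt_top.mpr
        intro i _
        exact ENNReal.pow_lt_top (measure_lt_top μ _)
      have h2 : (P {ω | ∃ i : Fin n, ∀ k < N, ω k ≠ i}).toReal
          ≤ (∑ i : Fin n, (μ ({i}ᶜ))^N).toReal := ENNReal.toReal_mono hfin hle1
      have h3 : (∑ i : Fin n, (μ ({i}ᶜ))^N).toReal
          = ∑ i : Fin n, ((μ ({i}ᶜ)).toReal)^N := by
        rw [ENNReal.toReal_sum (fun i _ => ENNReal.pow_ne_top (measure_ne_top μ _))]
        exact Finset.sum_congr rfl (fun i _ => ENNReal.toReal_pow _ _)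
      have hcompl_val : ∀ i : Fin n, (μ ({i}ᶜ)).toReal = 1 - (μ {i}).toReal := by
        intro i
        rw [measure_compl (measurableSet_singleton i) (measure_ne_top μ _)]
        rw [measure_univ, ENNReal.toReal_sub_of_le prob_le_one (by simp)]
        simp
      have h4 : ∑ i : Fin n, ((μ ({i}ᶜ)).toReal)^N ≤ (n:ℝ) * (1-p)^N := by
        calc ∑ i : Fin n, ((μ ({i}ᶜ)).toReal)^N
            ≤ ∑ _i : Fin n, (1-p)^N := by
              apply Finset.sum_le_sum
              intro i _
              rw [hcompl_val i]
              exact pow_le_pow_left₀ (by linarith [hμle1 i]) (by linarith [hμ i]) N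
          _ = (n:ℝ) * (1-p)^N := by
              rw [Finset.sum_const, Finset.card_univ, Fintype.card_fin, nsmul_eq_mul]
      have h5 := key_real n N p H hp1 hH1 hnexp hc.le
      linarith
  constructor
  · exact main
  · intro ε hε N hNge
    obtain ⟨hε0, hε1⟩ := hε
    have hHpos : (0:ℝ) < H := by linarith
    have hNpos : (0:ℝ) < (N:ℝ) := lt_of_lt_of_le (by positivity) hNge
    have hN1 : 1 ≤ N := by
      by_contra h
      push_neg at h
      interval_cases N
      · simp at hNpos
    have hbound := main N hN1
    have hNp0 : 0 < (N:ℝ) * p := by positivity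
    have h1 : H ≤ (N:ℝ) * (p * ε) := (div_le_iff₀ (by positivity)).mp hNge
    have h2 : H / ((N:ℝ) * p) ≤ ε := (div_le_iff₀ hNp0).mpr (by nlinarith)
    -- complement
    set bad := {ω : ℕ → Fin n | ∃ i : Fin n, ∀ k < N, ω k ≠ i} with hbad
    set good := {ω : ℕ → Fin n | ∀ i : Fin n, ∃ k < N, ω k = i} with hgood
    have hunion : (Set.univ : Set (ℕ → Fin n)) ⊆ bad ∪ good := by
      intro ω _
      by_cases h : ∃ i : Fin n, ∀ k < N, ω k ≠ i
      · exact Or.inl h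
      · right
        push_neg at h
        exact h
    have hEle : (1:ℝ≥0∞) ≤ P bad + P good := by
      calc (1:ℝ≥0∞) = P Set.univ := measure_univ.symm
        _ ≤ P (bad ∪ good) := measure_mono hunion
        _ ≤ P bad + P good := measure_union_le _ _
    have hfin2 : P bad + P good ≠ ⊤ :=
      ENNReal.add_ne_top.mpr ⟨measure_ne_top P _, measure_ne_top P _⟩
    have hR : (1:ℝ) ≤ (P bad).toReal + (P good).toReal := by
      have h := ENNReal.toReal_mono hfin2 hEle
      rwa [ENNReal.toReal_add (measure_ne_top P _) (measure_ne_top P _), ENNReal.toReal_one] at h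
    linarith
end
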